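/- Let W be a finite set of nonempty words over a finite alphabet A, and let w₁, w₂, w₃ be words with |w₁|, |w₂|, |w₃| > 2·max{|u| : u ∈ W}. If the words w₁w₂, w₂, and w₂w₃ are each uniquely built from W, then the word w₁w₂w₃ is uniquely built from W. -/

import Mathlib

namespace ToeplitzFR

open Set

variable {A B C : Type*}

/-- The shift map `S` on `ℤ → A`: `S(x)(i) = x(i+1)`. -/
def shift (x : ℤ → A) : ℤ → A := fun i => x (i + 1)

/-- The inverse shift map `S⁻¹`. -/
def shiftInv (x : ℤ → A) : ℤ → A := fun i => x (i - 1)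

/-- The shift by `k`: `S^k`. -/
def shiftBy (k : ℤ) (x : ℤ → A) : ℤ → A := fun i => x (i + k)

/-- The finite word `x[i, i+n)`. -/
def factorAt (x : ℤ → A) (i : ℤ) (n : ℕ) : List A :=
  (List.range n).map fun j => x (i + j)

/-- `x` is a periodic point of the shift. -/
def IsPeriodicPoint (x : ℤ → A) : Prop := ∃ p : ℕ, 0 < p ∧ ∀ i : ℤ, x (i + p) = x i

def IsAperiodicPoint (x : ℤ → A) : Prop := ¬ IsPeriodicPoint x

/-- `Per_p(x)`. -/
def PerSet (x : ℤ → A) (p : ℕ) : Set ℤ := {i : ℤ | ∀ k : ℤ, x (i + k * p) = x i}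

/-- `Per(x) = ⋃_{p>1} Per_p(x)`. -/
def PerAll (x : ℤ → A) : Set ℤ := {i : ℤ | ∃ p : ℕ, 1 < p ∧ i ∈ PerSet x p}

/-- `x` is a Toeplitz sequence. -/
def IsToeplitz (x : ℤ → A) : Prop := ∀ i : ℤ, ∃ p : ℕ, 1 < p ∧ i ∈ PerSet x p

/-- The shift orbit of `x`. -/
def orbit (x : ℤ → A) : Set (ℤ → A) := {y | ∃ k : ℤ, y = shiftBy k x}

/-- `X` is the Toeplitz subshift generated by the Toeplitz sequence `x`. -/
def ToeplitzGenerates [TopologicalSpace A] (x : ℤ → A) (X : Set (ℤ → A)) : Prop :=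
  IsToeplitz x ∧ X = closure (orbit x)

/-- `X` is a Toeplitz subshift. -/
def IsToeplitzSubshift [TopologicalSpace A] (X : Set (ℤ → A)) : Prop :=
  ∃ x : ℤ → A, ToeplitzGenerates x X

/-- The `p`-skeleton of `x`, with `none` as the blank symbol. -/
noncomputable def Skel (x : ℤ → A) (p : ℕ) : ℤ → Option A :=
  fun i => @ite _ (i ∈ PerSet x p) (Classical.dec _) (some (x i)) none

/-- `p` is an essential period of `x`. -/
def IsEssentialPeriod (x : ℤ → A) (p : ℕ) : Prop :=
  1 < p ∧ ∀ q : ℕ, 0 < q → q < p → ∃ i : ℤ, Skel x p (i + q) ≠ Skel x p i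

/-- `(P n)` is a period structure for `x`. -/
def IsPeriodStructure (x : ℤ → A) (P : ℕ → ℕ) : Prop :=
  StrictMono P ∧ (∀ n, IsEssentialPeriod x (P n)) ∧ (∀ n, P n ∣ P (n+1)) ∧
    ∀ i : ℤ, ∃ n, i ∈ PerSet x (P n)

/-- `q` divides the scale of the Toeplitz subshift `X`. -/
def DividesScale [TopologicalSpace A] (X : Set (ℤ → A)) (q : ℕ) : Prop :=
  ∃ (x : ℤ → A) (P : ℕ → ℕ),
    ToeplitzGenerates x X ∧ IsPeriodStructure x P ∧ ∃ n, q ∣ P n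

/-! ### Directive sequences and S-adic subshifts -/

/-- All morphisms in the directive sequence are non-erasing. -/
def NonErasing {A : ℕ → Type*} (τ : ∀ n, A (n+1) → List (A n)) : Prop :=
  ∀ n a, τ n a ≠ []

/-- The directive sequence has constant length. -/
def ConstantLength {A : ℕ → Type*} (τ : ∀ n, A (n+1) → List (A n)) : Prop :=
  ∀ n, ∀ a b : A (n+1), (τ n a).length = (τ n b).length

/-- The directive sequence is proper. -/
def ProperSeq {A : ℕ → Type*} (τ : ∀ n, A (n+1) → List (A n)) : Prop :=
  ∀ n, ∃ b c : A n, ∀ a : A (n+1), (τ n a).head? = some b ∧ (τ n a).getLast? = some c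

/-- `sadicWordAux τ n k a = τ_{[n, n+k)}(a)`. -/
def sadicWordAux {A : ℕ → Type*} (τ : ∀ n, A (n+1) → List (A n)) (n : ℕ) :
    ∀ k : ℕ, A (n + k) → List (A n)
  | 0, a => [a]
  | (k+1), a => (τ (n+k) a).flatMap (sadicWordAux τ n k)

/-- `word0 τ k a = τ_{[0, k)}(a)` for `a ∈ A k`. -/
def word0 {A : ℕ → Type*} (τ : ∀ n, A (n+1) → List (A n)) :
    ∀ k : ℕ, A k → List (A 0)
  | 0, a => [a]
  | (k+1), a => (τ k a).flatMap (word0 τ k)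

/-- The directive sequence is primitive. -/
def PrimitiveSeq {A : ℕ → Type*} (τ : ∀ n, A (n+1) → List (A n)) : Prop :=
  ∀ n, ∃ k : ℕ, 0 < k ∧ ∀ (a : A (n+k)) (b : A n), b ∈ sadicWordAux τ n k a

/-- The `n`-th level `X_τ^{(n)}` of the S-adic system generated by `τ`. -/
def XLevel {A : ℕ → Type*} (τ : ∀ n, A (n+1) → List (A n)) (n : ℕ) :
    Set (ℤ → A n) :=
  {y | ∀ (i : ℤ) (m : ℕ), ∃ k : ℕ, 0 < k ∧ ∃ a : A (n+k),
      (factorAt y i m).IsInfix (sadicWordAux τ n k a)}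

/-- The alphabet rank (`liminf_n |A_n|`) is at most `K`. -/
def AlphabetRankLE (A : ℕ → Type*) [∀ n, Fintype (A n)] (K : ℕ) : Prop :=
  ∀ N : ℕ, ∃ n, N ≤ n ∧ Fintype.card (A n) ≤ K

/-! ### Recognizability -/

/-- `z` is the bi-infinite concatenation `⋯σ(y(-1)).σ(y(0))σ(y(1))⋯`,
with `σ(y(0))` starting at coordinate `0`. -/
def IsConcat (σ : B → List C) (y : ℤ → B) (z : ℤ → C) : Prop :=
  ∃ c : ℤ → ℤ, c 0 = 0 ∧ (∀ j : ℤ, c (j + 1) = c j + (σ (y j)).length) ∧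
    ∀ (j : ℤ) (m : Fin (σ (y j)).length), z (c j + (m : ℕ)) = (σ (y j)).get m

/-- `(y, k)` is a centered `σ`-representation of `x` in `Y`. -/
def IsCenteredRep (σ : B → List C) (Y : Set (ℤ → B)) (x : ℤ → C)
    (y : ℤ → B) (k : ℕ) : Prop :=
  y ∈ Y ∧ k < (σ (y 0)).length ∧ IsConcat σ y (fun m => x (m - k))

/-- The morphism `σ` is recognizable in `Y`. -/
def RecognizableIn (σ : B → List C) (Y : Set (ℤ → B)) : Prop :=
  ∀ (x : ℤ → C) (y y' : ℤ → B) (k k' : ℕ),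
    IsCenteredRep σ Y x y k → IsCenteredRep σ Y x y' k' → y = y' ∧ k = k'

/-- The directive sequence `τ` is recognizable. -/
def RecognizableSeq {A : ℕ → Type*} (τ : ∀ n, A (n+1) → List (A n)) : Prop :=
  ∀ n, RecognizableIn (τ n) (XLevel τ (n+1))

/-! ### Conjugacy -/

/-- `(X, TX)` and `(Y, TY)` are conjugate via a homeomorphism. -/
def ConjugateBy [TopologicalSpace A] [TopologicalSpace B]
    (X : Set (ℤ → A)) (Y : Set (ℤ → B))
    (TX : (ℤ → A) → (ℤ → A)) (TY : (ℤ → B) → (ℤ → B)) : Prop :=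
  ∃ φ : ↥X ≃ₜ ↥Y, ∀ (x : ℤ → A) (hx : x ∈ X) (hx' : TX x ∈ X),
    (φ ⟨TX x, hx'⟩).1 = TY (φ ⟨x, hx⟩).1

/-- `(X, S)` and `(Y, S)` are conjugate subshifts. -/
def Conjugate [TopologicalSpace A] [TopologicalSpace B]
    (X : Set (ℤ → A)) (Y : Set (ℤ → B)) : Prop :=
  ConjugateBy X Y shift shift

/-- `X` is a strong Toeplitz subshift of rank `K`: it is conjugate to the S-adic subshift
of a constant-length, primitive, proper and recognizable directive sequence of
alphabet rank at most `K`. -/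
def IsStrongToeplitzOfRank [TopologicalSpace A] (X : Set (ℤ → A)) (K : ℕ) : Prop :=
  ∃ (B : ℕ → Type) (iB : ∀ n, Fintype (B n)) (σ : ∀ n, B (n+1) → List (B n)),
    NonErasing σ ∧ ConstantLength σ ∧ PrimitiveSeq σ ∧ ProperSeq σ ∧
    RecognizableSeq σ ∧ @AlphabetRankLE B iB K ∧
    @Conjugate A (B 0) _ ⊥ X (XLevel σ 0)

/-- `X` is conjugate to the S-adic subshift of a primitive, proper and recognizable
directive sequence of alphabet rank at most `K`. -/
def HasFiniteRankSAdicRep [TopologicalSpace A] (X : Set (ℤ → A)) (K : ℕ) : Prop :=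
  ∃ (B : ℕ → Type) (iB : ∀ n, Fintype (B n)) (σ : ∀ n, B (n+1) → List (B n)),
    NonErasing σ ∧ PrimitiveSeq σ ∧ ProperSeq σ ∧
    RecognizableSeq σ ∧ @AlphabetRankLE B iB K ∧
    @Conjugate A (B 0) _ ⊥ X (XLevel σ 0)

/-! ### Cuts, languages, built-from -/

/-- The set of words `{x[t+kp, t+(k+1)p) : k ∈ ℤ}`. -/
def cutWords (x : ℤ → A) (p t : ℕ) : Set (List A) :=
  {w | ∃ k : ℤ, w = factorAt x ((t : ℤ) + k * p) p}

/-- `(p, t)` is a strong rank-2 cut of `x`. -/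
def StrongRank2Cut (x : ℤ → A) (p t : ℕ) : Prop :=
  t < p ∧ ∃ u v : List A, u ≠ v ∧ cutWords x p t = {u, v}

/-- The language `L_n(X)`. -/
def Lang (n : ℕ) (X : Set (ℤ → A)) : Set (List A) :=
  {w | ∃ x ∈ X, ∃ i : ℤ, w = factorAt x i n}

/-- The maximal common prefix of `u` and `v` has length greater than `m`. -/
def CommonPrefixLongerThan (u v : List A) (m : ℕ) : Prop :=
  m + 1 ≤ u.length ∧ m + 1 ≤ v.length ∧ u.take (m+1) = v.take (m+1)

/-- The maximal common suffix of `u` and `v` has length greater than `m`. -/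
def CommonSuffixLongerThan (u v : List A) (m : ℕ) : Prop :=
  CommonPrefixLongerThan u.reverse v.reverse m

/-- `b = (β₀, (α₁, …, α_k), β₁)` is a building of the word `w` from `W`:
`w = β₀α₁⋯α_kβ₁`, all `αᵢ ∈ W`, `β₀` is a proper suffix of an element of `W`,
and `β₁` is a proper prefix of an element of `W`. -/
def IsBuilding (W : Set (List A)) (w : List A)
    (b : List A × List (List A) × List A) : Prop :=
  w = b.1 ++ b.2.1.flatten ++ b.2.2 ∧ (∀ α ∈ b.2.1, α ∈ W) ∧
  (∃ u ∈ W, b.1 <:+ u ∧ b.1 ≠ u) ∧ (∃ u ∈ W, b.2.2 <+: u ∧ b.2.2 ≠ u)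

/-- `w` is uniquely built from `W`. -/
def UniquelyBuiltFrom (W : Set (List A)) (w : List A) : Prop :=
  ∃! b : List A × List (List A) × List A, IsBuilding W w b

/-- `X` together with one of its points satisfies the strong rank-2 cut property. -/
def GoodCuts [TopologicalSpace A] (X : Set (ℤ → A)) (x : ℤ → A) : Prop :=
  ∀ p : ℕ, 0 < p → DividesScale X p → ∀ m : ℕ,
    ∃ q t : ℕ, StrongRank2Cut x q t ∧ p ∣ q ∧ DividesScale X q ∧
      ∃ u v : List A, u ≠ v ∧ cutWords x q t = {u, v} ∧
        CommonPrefixLongerThan u v m ∧ CommonSuffixLongerThan u v m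

/-! ### Euclidean pairs and buildings of bi-infinite sequences -/

/-- `{u, v}` is a Euclidean pair. -/
def EuclideanPair (u v : List A) : Prop :=
  ∃ (w : List A) (k l : ℕ),
    u = (List.replicate k w).flatten ∧ v = (List.replicate l w).flatten

/-- `α` is the distinguished prefix of `u` and `v`. -/
def IsDistinguishedPrefix (u v α : List A) : Prop :=
  α.length < u.length + v.length ∧
  ∀ x y : List A,
    (∃ l : List (List A), (∀ w ∈ l, w = u ∨ w = v) ∧ x = u ++ l.flatten) →
    (∃ l : List (List A), (∀ w ∈ l, w = u ∨ w = v) ∧ y = v ++ l.flatten) →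
    α.length + 1 ≤ x.length → α.length + 1 ≤ y.length →
    α <+: x ∧ α <+: y ∧ x[α.length]? ≠ y[α.length]?

/-- `β` is the distinguished suffix of `u` and `v`. -/
def IsDistinguishedSuffix (u v β : List A) : Prop :=
  IsDistinguishedPrefix u.reverse v.reverse β.reverse

/-- `(c, f)` is a building of the bi-infinite sequence `x` from `W`:
block `j` starts at position `c j` and carries the word `f j ∈ W`. -/
def IsBuildingSeq (W : Set (List A)) (x : ℤ → A) (c : ℤ → ℤ) (f : ℤ → List A) : Prop :=
  (∀ j : ℤ, f j ∈ W) ∧ (∀ j : ℤ, c (j + 1) = c j + (f j).length) ∧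
  ∀ (j : ℤ) (m : Fin (f j).length), x (c j + (m : ℕ)) = (f j).get m

/-- The subshift `X_{u,v}` of all sequences built from `{u, v}`. -/
def Xuv (u v : List A) : Set (ℤ → A) :=
  {x | ∃ (c : ℤ → ℤ) (f : ℤ → List A), IsBuildingSeq {u, v} x c f}

/-! ### Block-code conjugacies -/

/-- A conjugacy `φ : X → Y` admitting block width `2n+1`. -/
structure BlockConjugacy (A : Type*) (X Y : Set (ℤ → A)) (n : ℕ) where
  toFun : (ℤ → A) → (ℤ → A)
  invFun : (ℤ → A) → (ℤ → A)
  maps_to : ∀ x ∈ X, toFun x ∈ Y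
  maps_from : ∀ y ∈ Y, invFun y ∈ X
  left_inv : ∀ x ∈ X, invFun (toFun x) = x
  right_inv : ∀ y ∈ Y, toFun (invFun y) = y
  shift_comm : ∀ x ∈ X, toFun (shift x) = shift (toFun x)
  code : List A → A
  code_inv : List A → A
  code_spec : ∀ x ∈ X, ∀ i : ℤ, toFun x i = code (factorAt x (i - n) (2*n+1))
  code_inv_spec : ∀ y ∈ Y, ∀ i : ℤ, invFun y i = code_inv (factorAt y (i - n) (2*n+1))

/-! ### Parts, permutation action, χ -/

/-- `W` is a member of `Parts(X, p)`: a class of the common-`p`-skeleton relation. -/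
def SkelClass (X : Set (ℤ → A)) (p : ℕ) (W : Set (ℤ → A)) : Prop :=
  ∃ y ∈ X, W = {z ∈ X | Skel z p = Skel y p}

/-- The map `ψ̂` induced by a permutation `ψ` of `A^p`. -/
def permHat (p : ℕ) (ψ : Equiv.Perm (Fin p → A)) (x : ℤ → A) : ℤ → A :=
  fun i =>
    if h : (i.emod p).toNat < p then
      ψ (fun m : Fin p => x (i - i.emod p + (m : ℕ))) ⟨(i.emod p).toNat, h⟩
    else x i

/-- The relation `E_p` on compact subsets of `A^ℤ`. -/
def EpRel (p : ℕ) (K L : Set (ℤ → A)) : Prop :=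
  ∃ ψ : Equiv.Perm (Fin p → A), L = permHat p ψ '' K

/-- `W ∈ Parts_*(X, p)`. -/
def SkelClassStar (X : Set (ℤ → A)) (p : ℕ) (W : Set (ℤ → A)) : Prop :=
  SkelClass X p W ∧ ∀ y ∈ W, Skel y p (-1) = none ∧ Skel y p 0 ≠ none

/-- `length(W) = L` for `W ∈ Parts_*(X, p)`. -/
def HasLength (p : ℕ) (W : Set (ℤ → A)) (L : ℕ) : Prop :=
  ∀ y ∈ W, (∀ i : ℕ, i < L → Skel y p (i : ℤ) ≠ none) ∧ Skel y p (L : ℤ) = none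

/-- `Z ∈ χ(X, p)`. -/
def ChiMem (X : Set (ℤ → A)) (p : ℕ) (Z : Set (ℤ → A)) : Prop :=
  ∃ (W : Set (ℤ → A)) (L : ℕ), SkelClassStar X p W ∧ HasLength p W L ∧
    (∀ (W' : Set (ℤ → A)) (L' : ℕ),
      SkelClassStar X p W' → HasLength p W' L' → L' ≤ L) ∧
    Z = shiftBy ((L / 2 : ℕ) : ℤ) '' W

/-- `χ(X, p) E_p^fin χ(Y, p)`. -/
def ChiEpFin (X Y : Set (ℤ → A)) (p : ℕ) : Prop :=
  (∀ K, ChiMem X p K → ∃ L, ChiMem Y p L ∧ EpRel p K L) ∧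
  (∀ L, ChiMem Y p L → ∃ K, ChiMem X p K ∧ EpRel p K L)

/-! ### Single holes and fillings -/

/-- The Toeplitz sequence `x` has single holes with respect to the period structure `P`. -/
def SingleHoles (x : ℤ → A) (P : ℕ → ℕ) : Prop :=
  IsPeriodStructure x P ∧
  ∀ n, ∃! i : ℤ, 0 ≤ i ∧ i < (P n : ℤ) ∧ i ∉ PerSet x (P n)

/-- The Toeplitz subshift `X` has single holes. -/
def HasSingleHoles [TopologicalSpace A] (X : Set (ℤ → A)) : Prop :=
  ∃ (x : ℤ → A) (P : ℕ → ℕ), ToeplitzGenerates x X ∧ SingleHoles x P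

/-- `w` is the `(n, m)`-filling of `x` (for periods `pn < pm`). -/
def IsFilling (x : ℤ → A) (pn pm : ℕ) (w : List A) : Prop :=
  w.length = pm / pn - 1 ∧
  ∀ h : ℤ, 0 ≤ h → h < (pm : ℤ) → h ∉ PerSet x pm →
    ∀ (j : ℕ) (hj : j < w.length), w.get ⟨j, hj⟩ = x (h + (j+1) * pn)

/-- `u` is a `θ`-palindrome. -/
def ThetaPalindrome (θ : Equiv.Perm A) (u : List A) : Prop :=
  u.map (fun a => θ a) = u.reverse

/-! ### Nice symmetries -/

/-- `x` has nice symmetries with respect to `(p, q)`. -/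
def NiceSymmetries (x : ℤ → A) (p q : ℕ) : Prop :=
  ∃ m : ℤ, 1 < m ∧ m ≤ (q : ℤ) + 1 ∧
    (∀ k : ℕ, k < q / p →
      (Set.Ico ((k * p : ℕ) : ℤ) (((k+1) * p : ℕ) : ℤ) ⊆ PerSet x q ↔
       Set.Ico (m - ((k+1) * p : ℕ)) (m - (k * p : ℕ)) ⊆ PerSet x q)) ∧
    (∀ k k' : ℕ, k < q / p → k' < q / p →
      Set.Ico ((k * p : ℕ) : ℤ) (((k+1) * p : ℕ) : ℤ) ⊆ PerSet x q →
      Set.Ico ((k' * p : ℕ) : ℤ) (((k'+1) * p : ℕ) : ℤ) ⊆ PerSet x q →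
      (factorAt x ((k * p : ℕ) : ℤ) p = factorAt x ((k' * p : ℕ) : ℤ) p ↔
       factorAt x (m - ((k+1) * p : ℕ)) p = factorAt x (m - ((k'+1) * p : ℕ)) p))

/-- For some `p` dividing the scale of `X`, `x` has nice symmetries with respect to
`(p, q)` for all `q > p` with `p ∣ q` dividing the scale of `X`. -/
def NiceSymAll [TopologicalSpace A] (X : Set (ℤ → A)) (x : ℤ → A) : Prop :=
  ∃ p : ℕ, 0 < p ∧ DividesScale X p ∧
    ∀ q : ℕ, p < q → p ∣ q → DividesScale X q → NiceSymmetries x p q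

/-- A pair `(x, x')` is a centered left asymptotic pair. -/
def CenteredLeftAsymptoticPair (x x' : ℤ → A) : Prop :=
  (∀ i : ℤ, i < 0 → x i = x' i) ∧ x 0 ≠ x' 0

/-! ### Automorphism groups -/

/-- `e` is an automorphism of the subshift `(X, S)`. -/
def IsShiftAutomorphism [TopologicalSpace A] (X : Set (ℤ → A)) (e : ↥X ≃ₜ ↥X) : Prop :=
  ∀ (x : ℤ → A) (hx : x ∈ X) (hx' : shift x ∈ X),
    (e ⟨shift x, hx'⟩).1 = shift (e ⟨x, hx⟩).1

/-- The automorphism group of `(X, S)` is isomorphic, as a group, to `ℤ × ℤ/nℤ`. -/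
def AutGroupIsoZxZmod [TopologicalSpace A] (X : Set (ℤ → A)) (n : ℕ) : Prop :=
  ∃ Φ : {e : ↥X ≃ₜ ↥X // IsShiftAutomorphism X e} → ℤ × ZMod n,
    Function.Bijective Φ ∧
    ∀ e f g : {e : ↥X ≃ₜ ↥X // IsShiftAutomorphism X e},
      (∀ z : ↥X, g.1 z = e.1 (f.1 z)) → Φ g = Φ e + Φ f

/-! ### The Polish space of subshifts over `ℤ` -/

/-- A point of the space `𝐒` of all (compact, nonempty, shift-invariant) subshifts
over finite alphabets contained in `ℤ`. -/
structure SubshiftSpace : Type where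
  carrier : Set (ℤ → ℤ)
  nonempty : carrier.Nonempty
  compact : IsCompact carrier
  invariant : shift '' carrier = carrier

/-- The topology on `𝐒` induced by the languages `(L_n(X))_{n}`, with each
family of `n`-languages discrete; this coincides with the metric
`d(X,Y) = 2^{-min{n : L_n(X) ≠ L_n(Y)}}`. -/
instance : TopologicalSpace SubshiftSpace :=
  TopologicalSpace.induced
    (fun X : SubshiftSpace => (fun n => Lang n X.carrier : ℕ → Set (List ℤ)))
    (@Pi.topologicalSpace ℕ (fun _ => Set (List ℤ)) (fun _ => ⊥))

/-- The subset `𝐌 ⊆ 𝐒` of infinite minimal subshifts. -/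
def MinimalSet : Set SubshiftSpace :=
  {X | X.carrier.Infinite ∧ ∀ x ∈ X.carrier, X.carrier ⊆ closure (orbit x)}


section S7
variable {A : Type*}

/-! #### generic list helpers -/

lemma S7.getLastI_cons {α} [Inhabited α] {a : α} {l : List α} (h : l ≠ []) :
    (a :: l).getLastI = l.getLastI := by
  obtain ⟨c, hc⟩ := Option.isSome_iff_exists.mp (List.getLast?_isSome.mpr h)
  simp [List.getLastI_eq_getLast?, List.getLast?_cons, hc]

lemma S7.getLast?_eq_getLastI {α} [Inhabited α] {l : List α} (h : l ≠ []) :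
    l.getLast? = some l.getLastI := by
  obtain ⟨c, hc⟩ := Option.isSome_iff_exists.mp (List.getLast?_isSome.mpr h)
  simp [List.getLastI_eq_getLast?, hc]

lemma S7.getLastI_mem {α} [Inhabited α] {l : List α} (h : l ≠ []) : l.getLastI ∈ l := by
  obtain ⟨c, hc⟩ := Option.isSome_iff_exists.mp (List.getLast?_isSome.mpr h)
  rw [List.getLastI_eq_getLast?, hc]
  exact List.mem_of_mem_getLast? (by rw [hc]; rfl)

lemma S7.headI_mem {α} [Inhabited α] {l : List α} (h : l ≠ []) : l.headI ∈ l := by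
  cases l with
  | nil => exact absurd rfl h
  | cons a t => simp

lemma S7.head?_eq_headI {α} [Inhabited α] {l : List α} (h : l ≠ []) :
    l.head? = some l.headI := by
  cases l with
  | nil => exact absurd rfl h
  | cons a t => rfl

lemma S7.getLastI_append {α} [Inhabited α] {l₁ l₂ : List α} (h : l₂ ≠ []) :
    (l₁ ++ l₂).getLastI = l₂.getLastI := by
  obtain ⟨c, hc⟩ := Option.isSome_iff_exists.mp (List.getLast?_isSome.mpr h)
  rw [List.getLastI_eq_getLast?, List.getLast?_append_of_ne_nil _ h, hc,
    List.getLastI_eq_getLast?, hc]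

lemma S7.getLastI_map {α β} [Inhabited α] [Inhabited β] (f : α → β) {l : List α} (h : l ≠ []) :
    (l.map f).getLastI = f l.getLastI := by
  obtain ⟨c, hc⟩ := Option.isSome_iff_exists.mp (List.getLast?_isSome.mpr h)
  rw [List.getLastI_eq_getLast?, List.getLast?_map, hc, List.getLastI_eq_getLast?, hc]
  rfl

lemma S7.chain'_imp_mem {α} {R S : α → α → Prop} {l : List α} (h : l.IsChain R)
    (hm : ∀ a ∈ l, ∀ b ∈ l, R a b → S a b) : l.IsChain S := by
  induction l with
  | nil => simp
  | cons a l ih =>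
    cases l with
    | nil => simp
    | cons b t =>
      rw [List.isChain_cons_cons] at h ⊢
      exact ⟨hm _ (by simp) _ (by simp) h.1,
        ih h.2 (fun x hx y hy hr => hm x (by simp [hx]) y (by simp [hy]) hr)⟩

lemma S7.chain'_zip_tail {α} {R : α → α → Prop} : ∀ {l : List α}, l.IsChain R →
    ∀ p ∈ l.zip l.tail, R p.1 p.2 := by
  intro l
  induction l with
  | nil => simp
  | cons a l ih =>
    cases l with
    | nil => simp
    | cons b t =>
      rw [List.isChain_cons_cons]
      rintro ⟨h1, h2⟩ p hp
      rcases List.mem_cons.mp hp with h | h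
      · subst h; exact h1
      · exact ih h2 p h

lemma S7.proper_prefix_length_lt {l u : List A} (h : l <+: u) (hne : l ≠ u) :
    l.length < u.length :=
  lt_of_le_of_ne h.length_le (fun he => hne (List.IsPrefix.eq_of_length h he))

lemma S7.proper_suffix_length_lt {l u : List A} (h : l <:+ u) (hne : l ≠ u) :
    l.length < u.length :=
  lt_of_le_of_ne h.length_le (fun he => hne (List.IsSuffix.eq_of_length h he))

/-! #### slices -/

def S7.slice (w : List A) (a b : ℕ) : List A := (w.drop a).take (b - a)

lemma S7.slice_self (w : List A) (a : ℕ) : S7.slice w a a = [] := by simp [S7.slice]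

lemma S7.length_slice (w : List A) {a b : ℕ} (hab : a ≤ b) (hb : b ≤ w.length) :
    (S7.slice w a b).length = b - a := by
  simp [S7.slice]; omega

lemma S7.slice_append_slice (w : List A) {a b c : ℕ} (hab : a ≤ b) (hbc : b ≤ c) :
    S7.slice w a b ++ S7.slice w b c = S7.slice w a c := by
  have h1 : w.drop b = (w.drop a).drop (b - a) := by rw [List.drop_drop]; congr 1; omega
  rw [S7.slice, S7.slice, S7.slice, h1, show c - a = (b - a) + (c - b) by omega,
    List.take_add]

lemma S7.slice_append_right (w v : List A) {a b : ℕ} (hb : b ≤ w.length) :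
    S7.slice (w ++ v) a b = S7.slice w a b := by
  rcases le_or_gt b a with h | h
  · have hba : b - a = 0 := by omega
    simp [S7.slice, hba]
  · have ha : a ≤ w.length := by omega
    rw [S7.slice, S7.slice, List.drop_append_of_le_length ha,
      List.take_append_of_le_length (by simp; omega)]

lemma S7.slice_append_left (w v : List A) {a b : ℕ} (ha : w.length ≤ a) :
    S7.slice (w ++ v) a b = S7.slice v (a - w.length) (b - w.length) := by
  have hd : (w ++ v).drop a = v.drop (a - w.length) := by
    rw [show a = w.length + (a - w.length) by omega, List.drop_length_add_append]
    congr 1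
    omega
  rw [S7.slice, S7.slice, hd]
  congr 1
  omega

/-! #### cut lists -/

def S7.GCuts (W : Set (List A)) (w : List A) (cs : List ℕ) : Prop :=
  cs ≠ [] ∧
  cs.IsChain (fun a b => a < b ∧ S7.slice w a b ∈ W) ∧
  (∀ c ∈ cs, c ≤ w.length) ∧
  (∃ u ∈ W, w.take cs.headI <:+ u ∧ w.take cs.headI ≠ u) ∧
  (∃ u ∈ W, w.drop cs.getLastI <+: u ∧ w.drop cs.getLastI ≠ u)

def S7.blocks (w : List A) (cs : List ℕ) : List (List A) :=
  (cs.zip cs.tail).map fun p => S7.slice w p.1 p.2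

def S7.mkB (w : List A) (cs : List ℕ) : List A × List (List A) × List A :=
  (w.take cs.headI, S7.blocks w cs, w.drop cs.getLastI)

def S7.cutsOf (b : List A × List (List A) × List A) : List ℕ :=
  List.scanl (fun s α => s + α.length) b.1.length b.2.1

lemma S7.le_getLastI : ∀ (t : List ℕ) (c : ℕ), (c :: t).IsChain (· ≤ ·) →
    c ≤ (c :: t).getLastI := by
  intro t
  induction t with
  | nil => intro c _; simp [List.getLastI]
  | cons c' t' ih =>
    intro c h
    rw [List.isChain_cons_cons] at h
    rw [S7.getLastI_cons (by simp)]
    exact le_trans h.1 (ih c' h.2)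

lemma S7.flatten_blocks {w : List A} : ∀ (t : List ℕ) (c : ℕ),
    (c :: t).IsChain (· ≤ ·) →
    (S7.blocks w (c :: t)).flatten = S7.slice w c (c :: t).getLastI := by
  intro t
  induction t with
  | nil => intro c _; simp [S7.blocks, S7.slice, List.getLastI]
  | cons c' t' ih =>
    intro c h
    rw [List.isChain_cons_cons] at h
    have h1 : S7.blocks w (c :: c' :: t') = S7.slice w c c' :: S7.blocks w (c' :: t') := by
      simp [S7.blocks]
    rw [h1, List.flatten_cons, S7.getLastI_cons (a := c) (l := c' :: t') (by simp), ih c' h.2]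
    exact S7.slice_append_slice w h.1 (S7.le_getLastI _ _ h.2)

lemma S7.scanl_blocks {w : List A} : ∀ (t : List ℕ) (c : ℕ),
    (c :: t).IsChain (· < ·) → (∀ x ∈ c :: t, x ≤ w.length) →
    List.scanl (fun s α => s + α.length) c (S7.blocks w (c :: t)) = c :: t := by
  intro t
  induction t with
  | nil => intro c _ _; simp [S7.blocks, List.scanl]
  | cons c' t' ih =>
    intro c h hb
    rw [List.isChain_cons_cons] at h
    have h1 : S7.blocks w (c :: c' :: t') = S7.slice w c c' :: S7.blocks w (c' :: t') := by
      simp [S7.blocks]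
    have hlen : (S7.slice w c c').length = c' - c :=
      S7.length_slice w (le_of_lt h.1) (hb c' (by simp))
    rw [h1, List.scanl_cons, hlen, show c + (c' - c) = c' by omega,
      ih c' h.2 (fun x hx => hb x (by simp at hx ⊢; tauto))]

/-! #### buildings ↔ cut lists -/

lemma S7.scanl_spec {W : Set (List A)} (hWne : ∀ u ∈ W, u ≠ []) :
    ∀ (l : List (List A)) (x rest w : List A), (∀ α ∈ l, α ∈ W) →
      w = x ++ l.flatten ++ rest →
      (List.scanl (fun s α => s + α.length) x.length l).IsChain
        (fun a b => a < b ∧ S7.slice w a b ∈ W) ∧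
      (∀ c ∈ List.scanl (fun s α => s + α.length) x.length l, c ≤ w.length) ∧
      (List.scanl (fun s α => s + α.length) x.length l).getLastI
        = x.length + l.flatten.length ∧
      S7.blocks w (List.scanl (fun s α => s + α.length) x.length l) = l := by
  intro l
  induction l with
  | nil =>
    intro x rest w _ hw
    subst hw
    refine ⟨by simp [List.scanl], ?_, by simp [List.scanl, List.getLastI], ?_⟩
    · intro c hc
      simp [List.scanl] at hc
      subst hc
      simp
    · simp [List.scanl, S7.blocks]
  | cons α l ih =>
    intro x rest w hmem hw
    have hα : α ∈ W := hmem α (by simp)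
    have hw' : w = (x ++ α) ++ l.flatten ++ rest := by
      rw [hw]; simp
    have ih' := ih (x ++ α) rest w (fun β hβ => hmem β (by simp [hβ])) hw'
    rw [List.length_append] at ih'
    set f : ℕ → List A → ℕ := fun s α => s + α.length with hf
    set S := List.scanl f (x.length + α.length) l with hS
    have hSne : ∃ r, S = (x.length + α.length) :: r := by
      cases l with
      | nil => exact ⟨[], rfl⟩
      | cons β t => exact ⟨_, List.scanl_cons⟩
    obtain ⟨r, hr⟩ := hSne
    have hscanl : List.scanl f x.length (α :: l) = x.length :: S := List.scanl_cons
    have hslice : S7.slice w x.length (x.length + α.length) = α := by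
      rw [hw, show x ++ (α :: l).flatten ++ rest = x ++ (α ++ (l.flatten ++ rest)) by simp,
        S7.slice, List.drop_left, Nat.add_sub_cancel_left, List.take_left]
    have hlt : x.length < x.length + α.length := by
      have := List.length_pos_iff.mpr (hWne α hα)
      omega
    refine ⟨?_, ?_, ?_, ?_⟩
    · rw [hscanl, hr, List.isChain_cons_cons]
      refine ⟨⟨hlt, by rw [hslice]; exact hα⟩, hr ▸ ih'.1⟩
    · intro c hc
      rw [hscanl] at hc
      rcases List.mem_cons.mp hc with h | h
      · subst h
        rw [hw]
        simp
      · exact ih'.2.1 c h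
    · rw [hscanl, S7.getLastI_cons (by rw [hr]; simp), ih'.2.2.1]
      simp
      omega
    · rw [hscanl, hr]
      have : S7.blocks w (x.length :: (x.length + α.length) :: r)
          = S7.slice w x.length (x.length + α.length)
            :: S7.blocks w ((x.length + α.length) :: r) := by
        simp [S7.blocks]
      rw [this, hslice, ← hr, ih'.2.2.2]

lemma S7.isBuilding_GCuts {W : Set (List A)} (hWne : ∀ u ∈ W, u ≠ [])
    {w : List A} {b : List A × List (List A) × List A} (hb : IsBuilding W w b) :
    S7.GCuts W w (S7.cutsOf b) ∧ S7.mkB w (S7.cutsOf b) = b := by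
  obtain ⟨hw, hmem, hβ₀, hβ₁⟩ := hb
  obtain ⟨β₀, l, β₁⟩ := b
  simp only at hw hmem hβ₀ hβ₁ ⊢
  have hs := S7.scanl_spec hWne l β₀ β₁ w hmem hw
  have hne : S7.cutsOf (β₀, l, β₁) ≠ [] := by
    simp only [S7.cutsOf]
    cases l <;> simp [List.scanl]
  have hheadI : (S7.cutsOf (β₀, l, β₁)).headI = β₀.length := by
    simp only [S7.cutsOf]
    cases l <;> simp [List.scanl]
  have htake : w.take β₀.length = β₀ := by
    rw [hw, show β₀ ++ l.flatten ++ β₁ = β₀ ++ (l.flatten ++ β₁) by simp, List.take_left]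
  have hdrop : w.drop (β₀.length + l.flatten.length) = β₁ := by
    rw [hw, show β₀ ++ l.flatten ++ β₁ = (β₀ ++ l.flatten) ++ β₁ by simp,
      show β₀.length + l.flatten.length = (β₀ ++ l.flatten).length by simp, List.drop_left]
  have hlast : (S7.cutsOf (β₀, l, β₁)).getLastI = β₀.length + l.flatten.length := hs.2.2.1
  constructor
  · exact ⟨hne, hs.1, hs.2.1, by rw [hheadI, htake]; exact hβ₀,
      by rw [hlast, hdrop]; exact hβ₁⟩
  · simp only [S7.mkB, hheadI, hlast, htake, hdrop]
    rw [show S7.blocks w (S7.cutsOf (β₀, l, β₁)) = l from hs.2.2.2]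

lemma S7.GCuts_isBuilding {W : Set (List A)} {w : List A} {cs : List ℕ}
    (h : S7.GCuts W w cs) : IsBuilding W w (S7.mkB w cs) := by
  obtain ⟨hne, hch, hbd, hh, hl⟩ := h
  obtain ⟨c, t, rfl⟩ : ∃ c t, cs = c :: t := by
    cases cs with
    | nil => exact absurd rfl hne
    | cons c t => exact ⟨c, t, rfl⟩
  have hle : (c :: t).IsChain (· ≤ ·) := hch.imp (fun _ _ hab => le_of_lt hab.1)
  have hfl : (S7.blocks w (c :: t)).flatten = S7.slice w c (c :: t).getLastI :=
    S7.flatten_blocks t c hle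
  have hcL : c ≤ (c :: t).getLastI := S7.le_getLastI t c hle
  have hLw : (c :: t).getLastI ≤ w.length := hbd _ (S7.getLastI_mem (by simp))
  refine ⟨?_, ?_, ?_, ?_⟩
  · simp only [S7.mkB, hfl]
    have h1 : S7.slice w c (c :: t).getLastI ++ w.drop ((c :: t).getLastI)
        = w.drop c := by
      rw [S7.slice, show w.drop ((c :: t).getLastI) = ((w.drop c).drop ((c :: t).getLastI - c))
        by rw [List.drop_drop]; congr 1; omega]
      exact List.take_append_drop _ _
    rw [show (c :: t).headI = c from rfl, List.append_assoc, h1, List.take_append_drop]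
  · intro α hα
    simp only [S7.mkB, S7.blocks, List.mem_map] at hα
    obtain ⟨p, hp, rfl⟩ := hα
    exact (S7.chain'_zip_tail hch p hp).2
  · exact hh
  · exact hl

lemma S7.cutsOf_mkB {W : Set (List A)} {w : List A} {cs : List ℕ}
    (h : S7.GCuts W w cs) : S7.cutsOf (S7.mkB w cs) = cs := by
  obtain ⟨hne, hch, hbd, hh, hl⟩ := h
  obtain ⟨c, t, rfl⟩ : ∃ c t, cs = c :: t := by
    cases cs with
    | nil => exact absurd rfl hne
    | cons c t => exact ⟨c, t, rfl⟩
  have hcw : c ≤ w.length := hbd c (by simp)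
  have htl : (w.take (c :: t).headI).length = c := by
    simp [List.length_take]
    omega
  simp only [S7.cutsOf, S7.mkB, htl]
  exact S7.scanl_blocks t c (hch.imp (fun _ _ hab => hab.1)) hbd

lemma S7.ubf_iff_GCuts {W : Set (List A)} (hWne : ∀ u ∈ W, u ≠ []) (w : List A) :
    UniquelyBuiltFrom W w ↔ ∃! cs, S7.GCuts W w cs := by
  constructor
  · rintro ⟨b, hb, hu⟩
    refine ⟨S7.cutsOf b, (S7.isBuilding_GCuts hWne hb).1, ?_⟩
    intro cs hcs
    have h1 := S7.GCuts_isBuilding hcs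
    have h2 := hu _ h1
    rw [← S7.cutsOf_mkB hcs, h2]
  · rintro ⟨cs, hcs, hu⟩
    refine ⟨S7.mkB w cs, S7.GCuts_isBuilding hcs, ?_⟩
    intro b hb
    obtain ⟨hg, hm⟩ := S7.isBuilding_GCuts hWne hb
    rw [← hm, hu _ hg]

/-! #### restriction lemmas -/

lemma S7.dropWhile_head_false {α} {p : α → Bool} :
    ∀ {l : List α} {c : α} {d : List α}, l.dropWhile p = c :: d → p c = false := by
  intro l
  induction l with
  | nil => intro c d h; simp [List.dropWhile] at h
  | cons a t ih =>
    intro c d h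
    rw [List.dropWhile_cons] at h
    by_cases hp : p a
    · exact ih (by simpa [hp] using h)
    · rw [if_neg hp] at h
      injection h with h1 h2
      rw [← h1]
      simpa using hp

lemma S7.GCuts_prefix {W : Set (List A)} {w v : List A} {cs : List ℕ}
    (hW : ∀ u ∈ W, u.length ≤ w.length)
    (h : S7.GCuts W (w ++ v) cs) :
    S7.GCuts W w (cs.takeWhile (fun c => decide (c ≤ w.length))) := by
  obtain ⟨hne, hch, hbd, ⟨u0, hu0, hsuf, hne0⟩, ⟨u1, hu1, hpre, hne1⟩⟩ := h
  obtain ⟨c0, rest, rfl⟩ : ∃ c0 rest, cs = c0 :: rest := by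
    cases cs with
    | nil => exact absurd rfl hne
    | cons c0 rest => exact ⟨c0, rest, rfl⟩
  have hc0tot : c0 ≤ (w ++ v).length := hbd c0 (by simp)
  have hlen0 : (List.take (c0 :: rest).headI (w ++ v)).length = c0 := by
    simp at hc0tot ⊢
    omega
  have hc0 : c0 < u0.length := hlen0 ▸ S7.proper_suffix_length_lt hsuf hne0
  have hc0L : c0 ≤ w.length := le_trans (le_of_lt hc0) (hW u0 hu0)
  have htcons : (c0 :: rest).takeWhile (fun c => decide (c ≤ w.length))
      = c0 :: rest.takeWhile (fun c => decide (c ≤ w.length)) := by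
    rw [List.takeWhile_cons, if_pos (by simpa using hc0L)]
  have htne : (c0 :: rest).takeWhile (fun c => decide (c ≤ w.length)) ≠ [] := by
    rw [htcons]; simp
  have htmem : ∀ x ∈ (c0 :: rest).takeWhile (fun c => decide (c ≤ w.length)),
      x ≤ w.length := fun x hx => by simpa using List.mem_takeWhile_imp hx
  have htd := List.takeWhile_append_dropWhile (p := fun c => decide (c ≤ w.length)) (l := c0 :: rest)
  refine ⟨htne, ?_, htmem, ?_, ?_⟩
  · refine S7.chain'_imp_mem (hch.prefix (List.takeWhile_prefix _)) ?_
    intro x _ y hy hR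
    obtain ⟨h1, h2⟩ := hR
    rw [S7.slice_append_right w v (htmem y hy)] at h2
    exact ⟨h1, h2⟩
  · rw [htcons]
    rw [show (c0 :: rest.takeWhile (fun c => decide (c ≤ w.length))).headI = c0 from rfl,
      show List.take c0 w = List.take c0 (w ++ v) from
        (List.take_append_of_le_length hc0L).symm]
    exact ⟨u0, hu0, hsuf, hne0⟩
  · cases hdc : (c0 :: rest).dropWhile (fun c => decide (c ≤ w.length)) with
    | nil =>
      have hteq : (c0 :: rest).takeWhile (fun c => decide (c ≤ w.length)) = c0 :: rest := by
        conv_rhs => rw [← htd, hdc]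
        rw [List.append_nil]
      rw [hteq]
      have hgmem : (c0 :: rest).getLastI
          ∈ (c0 :: rest).takeWhile (fun c => decide (c ≤ w.length)) := by
        rw [hteq]; exact S7.getLastI_mem (by simp)
      have hgL : (c0 :: rest).getLastI ≤ w.length := htmem _ hgmem
      have hdropeq : (w ++ v).drop ((c0 :: rest).getLastI)
          = w.drop ((c0 :: rest).getLastI) ++ v := List.drop_append_of_le_length hgL
      have h2 := S7.proper_prefix_length_lt hpre hne1
      refine ⟨u1, hu1, ?_, ?_⟩
      · exact (List.prefix_append _ _).trans (hdropeq ▸ hpre)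
      · intro heq
        rw [hdropeq, List.length_append] at h2
        have h3 := congrArg List.length heq
        simp only [List.length_drop] at h2 h3
        omega
    | cons cnext d' =>
      have hcnext : ¬ (cnext ≤ w.length) := by simpa using S7.dropWhile_head_false hdc
      have hcnexttot : cnext ≤ (w ++ v).length := by
        refine hbd _ ?_
        rw [← htd, hdc]
        exact List.mem_append_right _ (by simp)
      have hch2 : (((c0 :: rest).takeWhile (fun c => decide (c ≤ w.length)))
          ++ ((c0 :: rest).dropWhile (fun c => decide (c ≤ w.length)))).IsChain
          (fun a b => a < b ∧ S7.slice (w ++ v) a b ∈ W) := by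
        rw [htd]; exact hch
      have hcross := (List.isChain_append.mp hch2).2.2 _
        (S7.getLast?_eq_getLastI htne) cnext (by rw [hdc]; rfl)
      have hgL : ((c0 :: rest).takeWhile (fun c => decide (c ≤ w.length))).getLastI
          ≤ w.length := htmem _ (S7.getLastI_mem htne)
      refine ⟨S7.slice (w ++ v)
        (((c0 :: rest).takeWhile (fun c => decide (c ≤ w.length))).getLastI) cnext,
        hcross.2, ?_, ?_⟩
      · rw [S7.slice, List.drop_append_of_le_length hgL]
        refine List.prefix_take_iff.mpr ⟨List.prefix_append _ _, ?_⟩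
        simp only [List.length_drop]
        omega
      · intro heq
        have h3 := congrArg List.length heq
        rw [S7.length_slice _ (le_of_lt hcross.1) hcnexttot] at h3
        simp only [List.length_drop] at h3
        omega

lemma S7.GCuts_suffix {W : Set (List A)} {u v : List A} {cs : List ℕ}
    (hWu : ∀ α ∈ W, α.length ≤ u.length) (hWv : ∀ α ∈ W, α.length ≤ v.length)
    (h : S7.GCuts W (u ++ v) cs) :
    S7.GCuts W v ((cs.dropWhile (fun c => decide (c < u.length))).map (· - u.length)) ∧
    (∀ x ∈ cs.dropWhile (fun c => decide (c < u.length)), u.length ≤ x) ∧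
    cs.takeWhile (fun c => decide (c < u.length)) ≠ [] := by
  obtain ⟨hne, hch, hbd, ⟨u0, hu0, hsuf, hne0⟩, ⟨u1, hu1, hpre, hne1⟩⟩ := h
  obtain ⟨c0, rest, rfl⟩ : ∃ c0 rest, cs = c0 :: rest := by
    cases cs with
    | nil => exact absurd rfl hne
    | cons c0 rest => exact ⟨c0, rest, rfl⟩
  have hc0tot : c0 ≤ (u ++ v).length := hbd c0 (by simp)
  have hlen0 : (List.take (c0 :: rest).headI (u ++ v)).length = c0 := by
    simp at hc0tot ⊢
    omega
  have hc0u0 : c0 < u0.length := hlen0 ▸ S7.proper_suffix_length_lt hsuf hne0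
  have hc0 : c0 < u.length := lt_of_lt_of_le hc0u0 (hWu u0 hu0)
  have hgtot : (c0 :: rest).getLastI ≤ (u ++ v).length :=
    hbd _ (S7.getLastI_mem (by simp))
  have hglast : u.length < (c0 :: rest).getLastI := by
    have h2 := S7.proper_prefix_length_lt hpre hne1
    have h6 : u1.length ≤ v.length := hWv u1 hu1
    simp only [List.length_drop, List.length_append] at h2 hgtot
    omega
  have htd := List.takeWhile_append_dropWhile (p := fun c => decide (c < u.length)) (l := c0 :: rest)
  have htmem : ∀ x ∈ (c0 :: rest).takeWhile (fun c => decide (c < u.length)),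
      x < u.length := fun x hx => by simpa using List.mem_takeWhile_imp hx
  have htcons : (c0 :: rest).takeWhile (fun c => decide (c < u.length))
      = c0 :: rest.takeWhile (fun c => decide (c < u.length)) := by
    rw [List.takeWhile_cons, if_pos (by simpa using hc0)]
  have htne : (c0 :: rest).takeWhile (fun c => decide (c < u.length)) ≠ [] := by
    rw [htcons]; simp
  have hdne : (c0 :: rest).dropWhile (fun c => decide (c < u.length)) ≠ [] := by
    intro hd0
    have hteq : (c0 :: rest).takeWhile (fun c => decide (c < u.length)) = c0 :: rest := by
      conv_rhs => rw [← htd, hd0]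
      rw [List.append_nil]
    have h9 : (c0 :: rest).getLastI
        ∈ (c0 :: rest).takeWhile (fun c => decide (c < u.length)) := by
      rw [hteq]; exact S7.getLastI_mem (by simp)
    have := htmem _ h9
    omega
  obtain ⟨cdh, d0, hdc⟩ : ∃ cdh d0,
      (c0 :: rest).dropWhile (fun c => decide (c < u.length)) = cdh :: d0 := by
    cases hdx : (c0 :: rest).dropWhile (fun c => decide (c < u.length)) with
    | nil => exact absurd hdx hdne
    | cons x y => exact ⟨x, y, rfl⟩
  have hcdh : u.length ≤ cdh := by
    have h8 := S7.dropWhile_head_false hdc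
    simp at h8
    omega
  have hsorted : (c0 :: rest).Pairwise (· < ·) :=
    List.isChain_iff_pairwise.mp (hch.imp (fun _ _ hab => hab.1))
  have hdsub : (c0 :: rest).dropWhile (fun c => decide (c < u.length)) <:+ (c0 :: rest) :=
    List.dropWhile_suffix _
  have hdsorted : ((c0 :: rest).dropWhile (fun c => decide (c < u.length))).Pairwise (· < ·) :=
    hsorted.sublist hdsub.sublist
  have hdmem : ∀ x ∈ (c0 :: rest).dropWhile (fun c => decide (c < u.length)),
      u.length ≤ x := by
    intro x hx
    rw [hdc] at hx hdsorted
    rcases List.mem_cons.mp hx with h | h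
    · omega
    · have := (List.pairwise_cons.mp hdsorted).1 x h
      omega
  have hdbd : ∀ x ∈ (c0 :: rest).dropWhile (fun c => decide (c < u.length)),
      x ≤ (u ++ v).length := fun x hx => hbd x (hdsub.subset hx)
  have hdch : ((c0 :: rest).dropWhile (fun c => decide (c < u.length))).IsChain
      (fun a b => a < b ∧ S7.slice (u ++ v) a b ∈ W) := hch.suffix hdsub
  have hdlast : ((c0 :: rest).dropWhile (fun c => decide (c < u.length))).getLastI
      = (c0 :: rest).getLastI := by
    conv_rhs => rw [← htd]
    rw [S7.getLastI_append hdne]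
  refine ⟨⟨?_, ?_, ?_, ?_, ?_⟩, hdmem, htne⟩
  · rw [hdc]; simp
  · rw [List.isChain_map]
    refine S7.chain'_imp_mem hdch ?_
    intro x hx y hy hR
    refine ⟨by have := hdmem x hx; have := hdmem y hy; omega, ?_⟩
    have h2 := hR.2
    rw [S7.slice_append_left u v (hdmem x hx)] at h2
    exact h2
  · intro c hc
    obtain ⟨x, hx, rfl⟩ := List.mem_map.mp hc
    have h10 := hdbd x hx
    simp only [List.length_append] at h10
    omega
  · -- head condition
    have hch2 : (((c0 :: rest).takeWhile (fun c => decide (c < u.length)))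
        ++ ((c0 :: rest).dropWhile (fun c => decide (c < u.length)))).IsChain
        (fun a b => a < b ∧ S7.slice (u ++ v) a b ∈ W) := by
      rw [htd]; exact hch
    have hcross := (List.isChain_append.mp hch2).2.2 _
      (S7.getLast?_eq_getLastI htne) cdh (by rw [hdc]; rfl)
    have hg0a : ((c0 :: rest).takeWhile (fun c => decide (c < u.length))).getLastI
        < u.length := htmem _ (S7.getLastI_mem htne)
    have hcdtot : cdh ≤ (u ++ v).length := hdbd cdh (by rw [hdc]; simp)
    have hheadm : (((c0 :: rest).dropWhile (fun c => decide (c < u.length))).map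
        (· - u.length)).headI = cdh - u.length := by rw [hdc]; rfl
    have hkey : v.take (cdh - u.length) = (S7.slice (u ++ v)
        (((c0 :: rest).takeWhile (fun c => decide (c < u.length))).getLastI) cdh).drop
        (u.length - ((c0 :: rest).takeWhile (fun c => decide (c < u.length))).getLastI) := by
      rw [S7.slice, List.drop_append_of_le_length (le_of_lt hg0a), List.drop_take,
        show u.length - ((c0 :: rest).takeWhile (fun c => decide (c < u.length))).getLastI
          = (u.drop (((c0 :: rest).takeWhile
              (fun c => decide (c < u.length))).getLastI)).length by
          simp only [List.length_drop],
        List.drop_left]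
      congr 1
      simp only [List.length_drop]
      omega
    have hαlen : (S7.slice (u ++ v)
        (((c0 :: rest).takeWhile (fun c => decide (c < u.length))).getLastI) cdh).length
        = cdh - ((c0 :: rest).takeWhile (fun c => decide (c < u.length))).getLastI :=
      S7.length_slice _ (le_of_lt hcross.1) hcdtot
    refine ⟨_, hcross.2, ?_, ?_⟩
    · rw [hheadm, hkey]
      exact List.drop_suffix _ _
    · rw [hheadm, hkey]
      intro heq
      have h3 := congrArg List.length heq
      simp only [List.length_drop, hαlen] at h3
      omega
  · -- last condition
    rw [S7.getLastI_map _ hdne, hdlast]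
    have hdr : v.drop ((c0 :: rest).getLastI - u.length)
        = (u ++ v).drop ((c0 :: rest).getLastI) := by
      conv_rhs => rw [show (c0 :: rest).getLastI
        = u.length + ((c0 :: rest).getLastI - u.length) by omega, List.drop_length_add_append]
    rw [hdr]
    exact ⟨u1, hu1, hpre, hne1⟩

/-! #### gluing and recombination -/

lemma S7.headI_append {α} [Inhabited α] {l₁ l₂ : List α} (h : l₁ ≠ []) :
    (l₁ ++ l₂).headI = l₁.headI := by
  cases l₁ with
  | nil => exact absurd rfl h
  | cons a t => rfl

lemma S7.map_sub_add {a : ℕ} : ∀ (l : List ℕ), (∀ x ∈ l, a ≤ x) →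
    (l.map (· - a)).map (· + a) = l := by
  intro l hl
  rw [List.map_map]
  conv_rhs => rw [← List.map_id l]
  exact List.map_congr_left (fun x hx => by have := hl x hx; simp; omega)

lemma S7.takeWhile_lt_of_le {a L : ℕ} (haL : a ≤ L) :
    ∀ (l : List ℕ), (l.takeWhile (fun c => decide (c ≤ L))).takeWhile
        (fun c => decide (c < a)) = l.takeWhile (fun c => decide (c < a)) := by
  intro l
  induction l with
  | nil => rfl
  | cons c t ih =>
    by_cases hc : c < a
    · have hcL : c ≤ L := by omega
      rw [List.takeWhile_cons, if_pos (by simpa using hcL), List.takeWhile_cons,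
        if_pos (by simpa using hc), List.takeWhile_cons, if_pos (by simpa using hc), ih]
    · by_cases hcL : c ≤ L
      · rw [List.takeWhile_cons, if_pos (by simpa using hcL), List.takeWhile_cons,
          if_neg (by simpa using hc), List.takeWhile_cons, if_neg (by simpa using hc)]
      · rw [List.takeWhile_cons, if_neg (by simpa using hcL), List.takeWhile_cons,
          if_neg (by simpa using hc)]
        rfl

lemma S7.recombine {a L : ℕ} (haL : a ≤ L) {cs cs' : List ℕ}
    (h1 : cs.takeWhile (fun c => decide (c ≤ L)) = cs'.takeWhile (fun c => decide (c ≤ L)))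
    (h2 : (cs.dropWhile (fun c => decide (c < a))).map (· - a)
        = (cs'.dropWhile (fun c => decide (c < a))).map (· - a))
    (hm : ∀ x ∈ cs.dropWhile (fun c => decide (c < a)), a ≤ x)
    (hm' : ∀ x ∈ cs'.dropWhile (fun c => decide (c < a)), a ≤ x) : cs = cs' := by
  have hd : cs.dropWhile (fun c => decide (c < a))
      = cs'.dropWhile (fun c => decide (c < a)) := by
    rw [← S7.map_sub_add _ hm, ← S7.map_sub_add _ hm', h2]
  have ht : cs.takeWhile (fun c => decide (c < a))
      = cs'.takeWhile (fun c => decide (c < a)) := by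
    rw [← S7.takeWhile_lt_of_le haL cs, h1, S7.takeWhile_lt_of_le haL cs']
  calc cs = cs.takeWhile (fun c => decide (c < a))
        ++ cs.dropWhile (fun c => decide (c < a)) :=
      List.takeWhile_append_dropWhile.symm
    _ = cs'.takeWhile (fun c => decide (c < a))
        ++ cs'.dropWhile (fun c => decide (c < a)) := by rw [ht, hd]
    _ = cs' := List.takeWhile_append_dropWhile

lemma S7.GCuts_glue {W : Set (List A)} {w₁ w₂ w₃ : List A} {cs12 cs23 : List ℕ}
    (hW1 : ∀ α ∈ W, α.length ≤ w₁.length) (hW2 : ∀ α ∈ W, α.length ≤ w₂.length)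
    (h12 : S7.GCuts W (w₁ ++ w₂) cs12) (h23 : S7.GCuts W (w₂ ++ w₃) cs23)
    (heq : (cs12.dropWhile (fun c => decide (c < w₁.length))).map (· - w₁.length)
        = cs23.takeWhile (fun c => decide (c ≤ w₂.length))) :
    S7.GCuts W (w₁ ++ (w₂ ++ w₃))
      (cs12.takeWhile (fun c => decide (c < w₁.length)) ++ cs23.map (· + w₁.length)) := by
  have hW23 : ∀ α ∈ W, α.length ≤ (w₂ ++ w₃).length := by
    intro α hα
    have := hW2 α hα
    simp only [List.length_append]
    omega
  obtain ⟨hsfx, hdmem, htne⟩ := S7.GCuts_suffix hW1 hW2 h12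
  obtain ⟨hne12, hch12, hbd12, hh12, hl12⟩ := h12
  obtain ⟨hne23, hch23, hbd23, hh23, hl23⟩ := h23
  -- structure of cs23
  obtain ⟨e0, e', rfl⟩ : ∃ e0 e', cs23 = e0 :: e' := by
    cases cs23 with
    | nil => exact absurd rfl hne23
    | cons e0 e' => exact ⟨e0, e', rfl⟩
  obtain ⟨v0, hv0, hsuf23, hnev0⟩ := hh23
  have he0tot : e0 ≤ (w₂ ++ w₃).length := hbd23 e0 (by simp)
  have hlen23 : (List.take (e0 :: e').headI (w₂ ++ w₃)).length = e0 := by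
    simp at he0tot ⊢
    omega
  have he0 : e0 ≤ w₂.length :=
    le_trans (le_of_lt (hlen23 ▸ S7.proper_suffix_length_lt hsuf23 hnev0)) (hW2 v0 hv0)
  have htw23 : (e0 :: e').takeWhile (fun c => decide (c ≤ w₂.length))
      = e0 :: e'.takeWhile (fun c => decide (c ≤ w₂.length)) := by
    rw [List.takeWhile_cons, if_pos (by simpa using he0)]
  -- structure of the dropWhile part of cs12
  have hdne12 : cs12.dropWhile (fun c => decide (c < w₁.length)) ≠ [] := by
    intro h0
    rw [h0] at heq
    rw [htw23] at heq
    simp at heq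
  obtain ⟨cdh, d0, hdc⟩ : ∃ cdh d0,
      cs12.dropWhile (fun c => decide (c < w₁.length)) = cdh :: d0 := by
    cases hdx : cs12.dropWhile (fun c => decide (c < w₁.length)) with
    | nil => exact absurd hdx hdne12
    | cons x y => exact ⟨x, y, rfl⟩
  have hcdh_eq : cdh = e0 + w₁.length := by
    rw [hdc, htw23] at heq
    simp only [List.map_cons, List.cons.injEq] at heq
    have := hdmem cdh (by rw [hdc]; simp)
    omega
  -- structure of cs12
  obtain ⟨c0, rest, rfl⟩ : ∃ c0 rest, cs12 = c0 :: rest := by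
    cases cs12 with
    | nil => exact absurd rfl hne12
    | cons c0 rest => exact ⟨c0, rest, rfl⟩
  obtain ⟨z0, hz0, hsuf12, hnez0⟩ := hh12
  have hc0tot : c0 ≤ (w₁ ++ w₂).length := hbd12 c0 (by simp)
  have hlen12 : (List.take (c0 :: rest).headI (w₁ ++ w₂)).length = c0 := by
    simp at hc0tot ⊢
    omega
  have hc0 : c0 < w₁.length :=
    lt_of_lt_of_le (hlen12 ▸ S7.proper_suffix_length_lt hsuf12 hnez0) (hW1 z0 hz0)
  have htcons12 : (c0 :: rest).takeWhile (fun c => decide (c < w₁.length))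
      = c0 :: rest.takeWhile (fun c => decide (c < w₁.length)) := by
    rw [List.takeWhile_cons, if_pos (by simpa using hc0)]
  have htd12 := List.takeWhile_append_dropWhile
    (p := fun c => decide (c < w₁.length)) (l := c0 :: rest)
  have htmem12 : ∀ x ∈ (c0 :: rest).takeWhile (fun c => decide (c < w₁.length)),
      x < w₁.length := fun x hx => by simpa using List.mem_takeWhile_imp hx
  have hch2 : (((c0 :: rest).takeWhile (fun c => decide (c < w₁.length)))
      ++ ((c0 :: rest).dropWhile (fun c => decide (c < w₁.length)))).IsChain
      (fun a b => a < b ∧ S7.slice (w₁ ++ w₂) a b ∈ W) := by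
    rw [htd12]; exact hch12
  have hcross := (List.isChain_append.mp hch2).2.2 _
    (S7.getLast?_eq_getLastI htne) cdh (by rw [hdc]; rfl)
  have hmne : (e0 :: e').map (· + w₁.length) ≠ [] := by simp
  refine ⟨?_, ?_, ?_, ?_, ?_⟩
  · intro h0
    exact htne (List.append_eq_nil_iff.mp h0).1
  · rw [List.isChain_append]
    refine ⟨?_, ?_, ?_⟩
    · refine S7.chain'_imp_mem (hch12.prefix (List.takeWhile_prefix _)) ?_
      intro x _ y hy hR
      obtain ⟨hlt, hsl⟩ := hR
      have hy' : y ≤ w₁.length := le_of_lt (htmem12 y hy)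
      rw [S7.slice_append_right w₁ w₂ hy'] at hsl
      exact ⟨hlt, by rw [S7.slice_append_right w₁ (w₂ ++ w₃) hy']; exact hsl⟩
    · rw [List.isChain_map]
      refine S7.chain'_imp_mem hch23 ?_
      intro x _ y _ hR
      obtain ⟨hlt, hsl⟩ := hR
      refine ⟨by omega, ?_⟩
      have hcv : S7.slice (w₁ ++ (w₂ ++ w₃)) (x + w₁.length) (y + w₁.length)
          = S7.slice (w₂ ++ w₃) x y := by
        rw [S7.slice_append_left w₁ (w₂ ++ w₃) (by omega)]
        congr 1 <;> omega
      rw [hcv]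
      exact hsl
    · intro x hx y hy
      rw [S7.getLast?_eq_getLastI htne] at hx
      simp only [Option.mem_some_iff] at hx
      have hy' : y = e0 + w₁.length := by
        simp only [List.map_cons, List.head?_cons, Option.mem_some_iff] at hy
        omega
      subst hx
      subst hy'
      have hcv : S7.slice (w₁ ++ (w₂ ++ w₃))
          (((c0 :: rest).takeWhile (fun c => decide (c < w₁.length))).getLastI)
          (e0 + w₁.length) = S7.slice (w₁ ++ w₂)
          (((c0 :: rest).takeWhile (fun c => decide (c < w₁.length))).getLastI)
          (e0 + w₁.length) := by
        rw [← List.append_assoc]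
        exact S7.slice_append_right _ w₃ (by simp only [List.length_append]; omega)
      rw [hcv]
      rw [hcdh_eq] at hcross
      exact hcross
  · intro c hc
    simp only [List.length_append]
    rcases List.mem_append.mp hc with h | h
    · have := htmem12 c h
      omega
    · obtain ⟨x, hx, rfl⟩ := List.mem_map.mp h
      have := hbd23 x hx
      simp only [List.length_append] at this
      omega
  · rw [S7.headI_append htne, htcons12]
    refine ⟨z0, hz0, ?_, ?_⟩
    · show (w₁ ++ (w₂ ++ w₃)).take c0 <:+ z0
      rw [← List.append_assoc,
        List.take_append_of_le_length (by simp only [List.length_append]; omega)]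
      rw [show (w₁ ++ w₂).take c0 = List.take (c0 :: rest).headI (w₁ ++ w₂) from rfl]
      exact hsuf12
    · show (w₁ ++ (w₂ ++ w₃)).take c0 ≠ z0
      rw [← List.append_assoc,
        List.take_append_of_le_length (by simp only [List.length_append]; omega)]
      exact hnez0
  · rw [S7.getLastI_append hmne, S7.getLastI_map _ (by simp : (e0 :: e') ≠ [])]
    have hdrop : (w₁ ++ (w₂ ++ w₃)).drop ((e0 :: e').getLastI + w₁.length)
        = (w₂ ++ w₃).drop ((e0 :: e').getLastI) := by
      rw [show (e0 :: e').getLastI + w₁.length = w₁.length + (e0 :: e').getLastI by omega,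
        List.drop_length_add_append]
    obtain ⟨v1, hv1, hpre23, hnev1⟩ := hl23
    refine ⟨v1, hv1, ?_, ?_⟩
    · show (w₁ ++ (w₂ ++ w₃)).drop ((e0 :: e').getLastI + w₁.length) <+: v1
      rw [hdrop]
      exact hpre23
    · show (w₁ ++ (w₂ ++ w₃)).drop ((e0 :: e').getLastI + w₁.length) ≠ v1
      rw [hdrop]
      exact hnev1

end S7

/-- If `w₁w₂`, `w₂` and `w₂w₃` are uniquely built from a finite set `W`
of nonempty words, and each `wᵢ` is longer than twice every word of `W`, then `w₁w₂w₃`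
is uniquely built from `W`. -/
theorem statement7 {A : Type*} [Fintype A] (W : Set (List A)) (hWfin : W.Finite)
    (hWne : ∀ w ∈ W, w ≠ []) (w₁ w₂ w₃ : List A)
    (h1 : ∀ u ∈ W, 2 * u.length < w₁.length)
    (h2 : ∀ u ∈ W, 2 * u.length < w₂.length)
    (h3 : ∀ u ∈ W, 2 * u.length < w₃.length)
    (h12 : UniquelyBuiltFrom W (w₁ ++ w₂))
    (h2' : UniquelyBuiltFrom W w₂)
    (h23 : UniquelyBuiltFrom W (w₂ ++ w₃)) :
    UniquelyBuiltFrom W (w₁ ++ w₂ ++ w₃) := by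
  have hW1 : ∀ α ∈ W, α.length ≤ w₁.length := fun α hα => by have := h1 α hα; omega
  have hW2 : ∀ α ∈ W, α.length ≤ w₂.length := fun α hα => by have := h2 α hα; omega
  have hW12 : ∀ α ∈ W, α.length ≤ (w₁ ++ w₂).length := fun α hα => by
    have := hW1 α hα; simp only [List.length_append]; omega
  have hW23 : ∀ α ∈ W, α.length ≤ (w₂ ++ w₃).length := fun α hα => by
    have := hW2 α hα; simp only [List.length_append]; omega
  rw [S7.ubf_iff_GCuts hWne] at h12 h2' h23 ⊢
  obtain ⟨cs12, hg12, hu12⟩ := h12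
  obtain ⟨cs2, hg2, hu2⟩ := h2'
  obtain ⟨cs23, hg23, hu23⟩ := h23
  obtain ⟨r1g, r1mem, r1tne⟩ := S7.GCuts_suffix hW1 hW2 hg12
  have r2g := S7.GCuts_prefix hW2 hg23
  have heq : (cs12.dropWhile (fun c => decide (c < w₁.length))).map (· - w₁.length)
      = cs23.takeWhile (fun c => decide (c ≤ w₂.length)) :=
    (hu2 _ r1g).trans (hu2 _ r2g).symm
  have hbig := S7.GCuts_glue hW1 hW2 hg12 hg23 heq
  refine ⟨_, by rw [List.append_assoc]; exact hbig, ?_⟩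
  intro cs hcs
  have hcs' : S7.GCuts W (w₁ ++ (w₂ ++ w₃)) cs := by
    rw [← List.append_assoc]; exact hcs
  have p1 := S7.GCuts_prefix hW12 hcs
  have pbig := S7.GCuts_prefix hW12
    (show S7.GCuts W ((w₁ ++ w₂) ++ w₃) _ by rw [List.append_assoc]; exact hbig)
  obtain ⟨s1g, s1mem, _⟩ := S7.GCuts_suffix hW1 hW23 hcs'
  obtain ⟨sbg, sbmem, _⟩ := S7.GCuts_suffix hW1 hW23 hbig
  exact S7.recombine (by simp only [List.length_append]; omega)
    ((hu12 _ p1).trans (hu12 _ pbig).symm)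
    ((hu23 _ s1g).trans (hu23 _ sbg).symm) s1mem sbmem


end ToeplitzFR
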